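/- Let γ : [0,1] → ℝ^d be a rectifiable curve monotone (nondecreasing) in each of d linearly independent directions q_1, …, q_d, with s = γ(0), t = γ(1). Let Q be the matrix with rows q_1, …, q_d, and let r_i denote the i-th column of Q⁻¹. Then the arc length of γ is at most the sum over i of |⟨t − s, q_i⟩| · |r_i|, i.e., the total length of d successive edges of the bounding parallelotope leading from s to t. -/

import Mathlib

set_option maxHeartbeats 1000000


open RealInnerProductSpace

theorem length_le_parallelotope_edges (d : ℕ)
    (γ : ℝ → EuclideanSpace ℝ (Fin d))
    (q : Fin d → EuclideanSpace ℝ (Fin d))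
    (hli : LinearIndependent ℝ q)
    (hmono : ∀ i, MonotoneOn (fun τ => ⟪γ τ, q i⟫) (Set.Icc (0:ℝ) 1))
    (hrect : eVariationOn γ (Set.Icc 0 1) ≠ ⊤)
    (Q : Matrix (Fin d) (Fin d) ℝ) (hQ : ∀ i j, Q i j = q i j) :
    (eVariationOn γ (Set.Icc 0 1)).toReal ≤
      ∑ i, |⟪γ 1 - γ 0, q i⟫| * Real.sqrt (∑ j, (Q⁻¹ j i) ^ 2) := by
  classical
  set C : ℝ := ∑ i, |⟪γ 1 - γ 0, q i⟫| * Real.sqrt (∑ j, (Q⁻¹ j i) ^ 2) with hC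
  -- Q is invertible
  have hQfun : (fun i ↦ Q i) = fun i => (WithLp.equiv 2 (Fin d → ℝ) (q i)) := by
    funext i; funext j; exact hQ i j
  have hunit : IsUnit Q := by
    rw [← Matrix.linearIndependent_rows_iff_isUnit]
    change LinearIndependent ℝ (fun i => Q i)
    rw [hQfun]
    exact hli.map' (WithLp.linearEquiv 2 ℝ (Fin d → ℝ)).toLinearMap
      (LinearEquiv.ker _)
  have hinv : Q⁻¹ * Q = 1 :=
    Matrix.nonsing_inv_mul Q ((Matrix.isUnit_iff_isUnit_det Q).mp hunit)
  -- columns of Q⁻¹ as vectors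
  set r : Fin d → EuclideanSpace ℝ (Fin d) :=
    fun i => (WithLp.equiv 2 (Fin d → ℝ)).symm (fun j => Q⁻¹ j i) with hr
  have hnormr : ∀ i, ‖r i‖ = Real.sqrt (∑ j, (Q⁻¹ j i) ^ 2) := by
    intro i
    rw [EuclideanSpace.norm_eq]
    congr 1; apply Finset.sum_congr rfl; intro j _
    rw [Real.norm_eq_abs, sq_abs]; rfl
  -- reconstruction
  have hinner : ∀ (x : EuclideanSpace ℝ (Fin d)) i, ⟪x, q i⟫ = ∑ k, Q i k * x k := by
    intro x i
    rw [PiLp.inner_apply]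
    apply Finset.sum_congr rfl
    intro k _
    rw [hQ i k, RCLike.inner_apply, conj_trivial, mul_comm]
  have hrecon : ∀ x : EuclideanSpace ℝ (Fin d), x = ∑ i, ⟪x, q i⟫ • r i := by
    intro x
    ext j
    have hrhs : (∑ i, ⟪x, q i⟫ • r i) j = ∑ i, ⟪x, q i⟫ * Q⁻¹ j i := by
      calc (∑ i, ⟪x, q i⟫ • r i) j
          = (WithLp.linearEquiv 2 ℝ (Fin d → ℝ)) (∑ i, ⟪x, q i⟫ • r i) j := rfl
        _ = (∑ i, (WithLp.linearEquiv 2 ℝ (Fin d → ℝ)) (⟪x, q i⟫ • r i)) j := by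
            rw [map_sum]
        _ = ∑ i, ⟪x, q i⟫ * Q⁻¹ j i := by
            rw [Finset.sum_apply]
            exact Finset.sum_congr rfl fun i _ => rfl
    rw [hrhs]
    simp only [hinner]
    calc x j = ∑ k, (Q⁻¹ * Q) j k * x k := by
          rw [hinv]; simp [Matrix.one_apply]
      _ = ∑ k, ∑ i, Q⁻¹ j i * Q i k * x k := by
          apply Finset.sum_congr rfl; intro k _
          rw [Matrix.mul_apply, Finset.sum_mul]
      _ = ∑ i, ∑ k, Q⁻¹ j i * Q i k * x k := Finset.sum_comm
      _ = ∑ i, (∑ k, Q i k * x k) * Q⁻¹ j i := by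
          apply Finset.sum_congr rfl; intro i _
          rw [Finset.sum_mul]
          apply Finset.sum_congr rfl; intro k _; ring
  -- distance bound
  have hdist : ∀ a b : ℝ, dist (γ a) (γ b) ≤ ∑ i, |⟪γ b - γ a, q i⟫| * ‖r i‖ := by
    intro a b
    rw [dist_comm, dist_eq_norm]
    calc ‖γ b - γ a‖ = ‖∑ i, ⟪γ b - γ a, q i⟫ • r i‖ := by rw [← hrecon]
      _ ≤ ∑ i, ‖⟪γ b - γ a, q i⟫ • r i‖ := norm_sum_le _ _
      _ = ∑ i, |⟪γ b - γ a, q i⟫| * ‖r i‖ := by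
          apply Finset.sum_congr rfl; intro i _
          rw [norm_smul, Real.norm_eq_abs]
  -- bound each partition sum
  have key : eVariationOn γ (Set.Icc 0 1) ≤ ENNReal.ofReal C := by
    apply iSup_le
    rintro ⟨n, u, hu, hus⟩
    have h1 : ∀ j, dist (γ (u j)) (γ (u (j+1))) ≤
        ∑ i, |⟪γ (u (j+1)) - γ (u j), q i⟫| * ‖r i‖ := fun j => hdist _ _
    have habs : ∀ i j, |⟪γ (u (j+1)) - γ (u j), q i⟫|
        = ⟪γ (u (j+1)), q i⟫ - ⟪γ (u j), q i⟫ := by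
      intro i j
      rw [inner_sub_left, abs_of_nonneg]
      exact sub_nonneg.2 (hmono i (hus j) (hus (j+1)) (hu (Nat.le_succ j)))
    have hsum : ∀ i, ∑ j ∈ Finset.range n, |⟪γ (u (j+1)) - γ (u j), q i⟫|
        ≤ |⟪γ 1 - γ 0, q i⟫| := by
      intro i
      simp only [habs]
      rw [Finset.sum_range_sub (fun j => ⟪γ (u j), q i⟫)]
      have h0 : (0:ℝ) ∈ Set.Icc (0:ℝ) 1 := by simp
      have h1' : (1:ℝ) ∈ Set.Icc (0:ℝ) 1 := by simp
      have e1 : ⟪γ (u n), q i⟫ ≤ ⟪γ 1, q i⟫ := hmono i (hus n) h1' (hus n).2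
      have e2 : ⟪γ 0, q i⟫ ≤ ⟪γ (u 0), q i⟫ := hmono i h0 (hus 0) (hus 0).1
      calc ⟪γ (u n), q i⟫ - ⟪γ (u 0), q i⟫ ≤ ⟪γ 1, q i⟫ - ⟪γ 0, q i⟫ := by linarith
        _ ≤ |⟪γ 1, q i⟫ - ⟪γ 0, q i⟫| := le_abs_self _
        _ = |⟪γ 1 - γ 0, q i⟫| := by rw [inner_sub_left]
    have hreal : ∑ j ∈ Finset.range n, dist (γ (u (j+1))) (γ (u j)) ≤ C := by
      calc ∑ j ∈ Finset.range n, dist (γ (u (j+1))) (γ (u j))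
          ≤ ∑ j ∈ Finset.range n, ∑ i, |⟪γ (u (j+1)) - γ (u j), q i⟫| * ‖r i‖ := by
            apply Finset.sum_le_sum; intro j _; rw [dist_comm]; exact h1 j
        _ = ∑ i, (∑ j ∈ Finset.range n, |⟪γ (u (j+1)) - γ (u j), q i⟫|) * ‖r i‖ := by
            rw [Finset.sum_comm]
            apply Finset.sum_congr rfl; intro i _; rw [Finset.sum_mul]
        _ ≤ ∑ i, |⟪γ 1 - γ 0, q i⟫| * ‖r i‖ := by
            apply Finset.sum_le_sum; intro i _
            exact mul_le_mul_of_nonneg_right (hsum i) (norm_nonneg _)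
        _ = C := by simp only [hC, hnormr]
    calc ∑ j ∈ Finset.range n, edist (γ (u (j+1))) (γ (u j))
        = ENNReal.ofReal (∑ j ∈ Finset.range n, dist (γ (u (j+1))) (γ (u j))) := by
          rw [ENNReal.ofReal_sum_of_nonneg (fun j _ => dist_nonneg)]
          apply Finset.sum_congr rfl; intro j _
          rw [edist_dist]
      _ ≤ ENNReal.ofReal C := ENNReal.ofReal_le_ofReal hreal
  have hCnn : 0 ≤ C := by
    apply Finset.sum_nonneg; intro i _
    exact mul_nonneg (abs_nonneg _) (Real.sqrt_nonneg _)
  exact ENNReal.toReal_le_of_le_ofReal hCnn key
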